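/- The number of (a,b)-parking functions of length m is a(a + mb)^{m-1}. -/

import Mathlib

namespace ABPFAux


open Finset

/-- running minimum over the window `(t-n, t]`. -/
noncomputable def M (S : ℤ → ℤ) (n : ℕ) (t : ℤ) : ℤ :=
  (insert t (Finset.Icc (t - ((n : ℤ) - 1)) t)).inf' ⟨t, Finset.mem_insert_self t _⟩ S

section Cycle

variable {S : ℤ → ℤ} {n A : ℕ}

lemma M_le (hn : 0 < n) {t y : ℤ} (h1 : t - n + 1 ≤ y) (h2 : y ≤ t) : M S n t ≤ S y :=
  Finset.inf'_le _ (by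
    simp only [Finset.mem_insert, Finset.mem_Icc]
    omega)

lemma le_M (hn : 0 < n) {t c : ℤ} (h : ∀ y, t - n + 1 ≤ y → y ≤ t → c ≤ S y) : c ≤ M S n t :=
  Finset.le_inf' _ _ (fun y hy => by
    simp only [Finset.mem_insert, Finset.mem_Icc] at hy
    exact h y (by omega) (by omega))

lemma M_attain (hn : 0 < n) (t : ℤ) : ∃ y, (t - n + 1 ≤ y ∧ y ≤ t) ∧ M S n t = S y := by
  obtain ⟨y, hy, h⟩ := Finset.exists_mem_eq_inf' (s := insert t (Finset.Icc (t - ((n : ℤ) - 1)) t)) ⟨t, Finset.mem_insert_self t _⟩ S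
  simp only [Finset.mem_insert, Finset.mem_Icc] at hy
  rcases hy with hy | hy
  · exact ⟨y, ⟨by omega, by omega⟩, h⟩
  · exact ⟨y, ⟨by omega, by omega⟩, h⟩

variable (hn : 0 < n) (hstep : ∀ t : ℤ, S (t - 1) - 1 ≤ S t)
  (hper : ∀ t : ℤ, S (t + n) = S t - A)

include hn hper in
lemma M_per (t : ℤ) : M S n (t + n) = M S n t - A := by
  have h1 : M S n (t + n) ≤ M S n t - A := by
    obtain ⟨y, ⟨hy1, hy2⟩, hy⟩ := M_attain (S := S) hn t
    have := M_le (S := S) hn (t := t + n) (y := y + n) (by omega) (by omega)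
    rw [hper y] at this
    omega
  have h2 : M S n t - A ≤ M S n (t + n) := by
    obtain ⟨y, ⟨hy1, hy2⟩, hy⟩ := M_attain (S := S) hn (t + n)
    have := M_le (S := S) hn (t := t) (y := y - n) (by omega) (by omega)
    have h3 : S (y - n + n) = S (y - n) - A := hper (y - n)
    have h4 : y - n + n = y := by ring
    rw [h4] at h3
    omega
  omega

include hn hper in
lemma M_mono (t : ℤ) : M S n t ≤ M S n (t - 1) := by
  obtain ⟨y, ⟨hy1, hy2⟩, hy⟩ := M_attain (S := S) hn (t - 1)
  rcases eq_or_lt_of_le hy1 with h | h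
  · -- y = t - n
    have h3 : S (t - n + n) = S (t - n) - A := hper (t - n)
    have h4 : t - n + n = t := by ring
    rw [h4] at h3
    have h5 : M S n t ≤ S t := M_le hn (by omega) le_rfl
    have : y = t - n := by omega
    subst this
    omega
  · have := M_le (S := S) hn (t := t) (y := y) (by omega) (by omega)
    omega

include hn hstep in
lemma M_drop (t : ℤ) : M S n (t - 1) ≤ M S n t + 1 := by
  obtain ⟨y, ⟨hy1, hy2⟩, hy⟩ := M_attain (S := S) hn t
  rcases eq_or_lt_of_le hy2 with h | h
  · have h1 := M_le (S := S) hn (t := t - 1) (y := t - 1) (by omega) (by omega)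
    have h2 := hstep t
    rw [h] at hy
    omega
  · have := M_le (S := S) hn (t := t - 1) (y := y) (by omega) (by omega)
    omega

include hn hstep hper in
lemma LMin_iff (hA : 0 < A) (t : ℤ) :
    (∀ y ∈ Finset.Ioo (t - (n : ℤ)) t, S t < S y) ↔ M S n (t - 1) = M S n t + 1 := by
  constructor
  · intro h
    have hMt : M S n t = S t := by
      have h1 : M S n t ≤ S t := M_le hn (by omega) le_rfl
      have h2 : S t ≤ M S n t := le_M hn (fun y hy1 hy2 => by
        rcases eq_or_lt_of_le hy2 with h' | h'
        · subst h'; exact le_rfl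
        · exact le_of_lt (h y (by simp only [Finset.mem_Ioo]; omega)))
      omega
    have h1 : S t + 1 ≤ M S n (t - 1) := le_M hn (fun y hy1 hy2 => by
      rcases eq_or_lt_of_le hy1 with h' | h'
      · have h3 : S (t - n + n) = S (t - n) - A := hper (t - n)
        have h4 : t - n + n = t := by ring
        rw [h4] at h3
        have : y = t - n := by omega
        subst this
        omega
      · have := h y (by simp only [Finset.mem_Ioo]; omega)
        omega)
    have h2 := M_drop (S := S) hn hstep t
    omega
  · intro h y hy
    simp only [Finset.mem_Ioo] at hy
    have hMt : M S n t = S t := by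
      obtain ⟨y₀, ⟨hy1, hy2⟩, hy₀⟩ := M_attain (S := S) hn t
      rcases eq_or_lt_of_le hy2 with h' | h'
      · subst h'; omega
      · have : M S n (t - 1) ≤ S y₀ := M_le hn (by omega) (by omega)
        omega
    have : M S n (t - 1) ≤ S y := M_le hn (by omega) (by omega)
    omega

lemma telescope (f : ℤ → ℤ) (t₀ : ℤ) (d : ℕ) :
    ∑ t ∈ Finset.Ioc t₀ (t₀ + d), (f (t - 1) - f t) = f t₀ - f (t₀ + d) := by
  induction d with
  | zero => simp
  | succ d ih =>
    have h1 : t₀ ≤ t₀ + (d : ℤ) := by omega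
    have h2 : t₀ + (d : ℤ) ≤ t₀ + (d + 1 : ℕ) := by push_cast; omega
    rw [← Finset.Ioc_union_Ioc_eq_Ioc h1 h2, Finset.sum_union (by
      apply Finset.disjoint_left.2
      intro x hx h'x
      simp only [Finset.mem_Ioc] at hx h'x
      omega)]
    have h3 : Finset.Ioc (t₀ + (d : ℤ)) (t₀ + ((d : ℕ) + 1 : ℕ)) = {t₀ + d + 1} := by
      ext y
      simp only [Finset.mem_Ioc, Finset.mem_singleton]
      push_cast
      omega
    rw [h3, ih, Finset.sum_singleton]
    have : (t₀ + ((d : ℕ) + 1 : ℕ) : ℤ) = t₀ + d + 1 := by push_cast; ring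
    rw [this]
    have h4 : t₀ + (d : ℤ) + 1 - 1 = t₀ + (d : ℤ) := by ring
    rw [h4]
    ring

include hn hstep hper in
lemma cycle_count (hA : 0 < A) :
    ((Finset.Ioc (0 : ℤ) (n : ℤ)).filter
      (fun t => ∀ y ∈ Finset.Ioo (t - (n : ℤ)) t, S t < S y)).card = A := by
  classical
  have key : ∀ t : ℤ, M S n (t - 1) - M S n t =
      if (∀ y ∈ Finset.Ioo (t - (n : ℤ)) t, S t < S y) then 1 else 0 := by
    intro t
    by_cases h : ∀ y ∈ Finset.Ioo (t - (n : ℤ)) t, S t < S y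
    · rw [if_pos h]
      have := (LMin_iff hn hstep hper hA t).1 h
      omega
    · rw [if_neg h]
      have h1 := M_mono (S := S) hn hper t
      have h2 := M_drop (S := S) hn hstep t
      have h3 : ¬ (M S n (t - 1) = M S n t + 1) := fun hc => h ((LMin_iff hn hstep hper hA t).2 hc)
      omega
  have tele := telescope (f := M S n) 0 n
  simp only [zero_add] at tele
  have hMn : M S n ((n : ℕ) : ℤ) = M S n 0 - A := by
    have := M_per (S := S) hn hper 0
    simpa using this
  have : ∑ t ∈ Finset.Ioc (0 : ℤ) (n : ℤ), (M S n (t - 1) - M S n t) = (A : ℤ) := by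
    rw [tele, hMn]; ring
  rw [Finset.sum_congr rfl (fun t _ => key t)] at this
  rw [Finset.sum_boole] at this
  exact_mod_cast this

end Cycle


open Finset

/-- representative of `z : ZMod n` in `[1, n]`. -/
def rep (n : ℕ) (z : ZMod n) : ℕ := if z = 0 then n else z.val

section Rep

variable {n : ℕ} [NeZero n]

lemma one_le_rep (z : ZMod n) : 1 ≤ rep n z := by
  unfold rep
  split
  · exact Nat.one_le_iff_ne_zero.2 (NeZero.ne n)
  · rename_i h
    exact Nat.one_le_iff_ne_zero.2 (fun hc => h ((ZMod.val_eq_zero z).1 hc))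

lemma rep_le (z : ZMod n) : rep n z ≤ n := by
  unfold rep
  split
  · exact le_rfl
  · exact le_of_lt (ZMod.val_lt z)

lemma cast_rep (z : ZMod n) : ((rep n z : ℕ) : ZMod n) = z := by
  unfold rep
  split
  · rename_i h
    simp [h]
  · exact ZMod.natCast_rightInverse z

lemma rep_cast {x : ℕ} (h1 : 1 ≤ x) (h2 : x ≤ n) : rep n ((x : ℕ) : ZMod n) = x := by
  rcases eq_or_lt_of_le h2 with h | h
  · subst h
    unfold rep
    rw [if_pos (by simp)]
  · unfold rep
    rw [if_neg, ZMod.val_cast_of_lt h]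
    intro hc
    have := ZMod.val_cast_of_lt h
    rw [hc, ZMod.val_zero] at this
    omega

end Rep

section Counting

variable {m n : ℕ}

/-- number of coordinates equal to `j` mod `n`. -/
def cnt (ρ : Fin m → ZMod n) (j : ℤ) : ℕ :=
  (Finset.univ.filter fun k => ρ k = (j : ZMod n)).card

/-- signed count of coordinates with representative in `(0, t]`. -/
noncomputable def N (ρ : Fin m → ZMod n) (t : ℤ) : ℤ :=
  (∑ j ∈ Finset.Ioc 0 t, (cnt ρ j : ℤ)) - ∑ j ∈ Finset.Ioc t 0, (cnt ρ j : ℤ)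

/-- the lattice path height function. -/
noncomputable def Sf (b : ℕ) (ρ : Fin m → ZMod n) (t : ℤ) : ℤ := b * N ρ t - t

lemma sum_Ioc_consec (ρ : Fin m → ZMod n) {x y z : ℤ} (h1 : x ≤ y) (h2 : y ≤ z) :
    (∑ j ∈ Finset.Ioc x y, (cnt ρ j : ℤ)) + ∑ j ∈ Finset.Ioc y z, (cnt ρ j : ℤ)
      = ∑ j ∈ Finset.Ioc x z, (cnt ρ j : ℤ) := by
  rw [← Finset.Ioc_union_Ioc_eq_Ioc h1 h2, Finset.sum_union]
  apply Finset.disjoint_left.2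
  intro w hw h'w
  simp only [Finset.mem_Ioc] at hw h'w
  omega

lemma N_add (ρ : Fin m → ZMod n) {t t' : ℤ} (h : t ≤ t') :
    N ρ t' = N ρ t + ∑ j ∈ Finset.Ioc t t', (cnt ρ j : ℤ) := by
  unfold N
  rcases le_or_gt 0 t with h0 | h0
  · rw [Finset.Ioc_eq_empty (a := t') (b := (0:ℤ)) (by omega),
      Finset.Ioc_eq_empty (a := t) (b := (0:ℤ)) (by omega)]
    have := sum_Ioc_consec ρ h0 h
    simp only [Finset.sum_empty]
    omega
  · rcases le_or_gt t' 0 with h0' | h0'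
    · rw [Finset.Ioc_eq_empty (a := (0:ℤ)) (b := t) (by omega),
        Finset.Ioc_eq_empty (a := (0:ℤ)) (b := t') (by omega)]
      have := sum_Ioc_consec ρ h h0'
      simp only [Finset.sum_empty]
      omega
    · have := sum_Ioc_consec ρ (le_of_lt h0) (le_of_lt h0')
      rw [Finset.Ioc_eq_empty (a := t') (b := (0:ℤ)) (by omega),
        Finset.Ioc_eq_empty (a := (0:ℤ)) (b := t) (by omega)]
      simp only [Finset.sum_empty]
      omega

lemma Ioc_pred_singleton (t : ℤ) : Finset.Ioc (t - 1) t = {t} := by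
  ext y
  simp only [Finset.mem_Ioc, Finset.mem_singleton]
  omega

lemma N_step (ρ : Fin m → ZMod n) (t : ℤ) : N ρ t = N ρ (t - 1) + cnt ρ t := by
  have := N_add ρ (t := t - 1) (t' := t) (by omega)
  rw [Ioc_pred_singleton, Finset.sum_singleton] at this
  exact this

lemma Sf_step (b : ℕ) (ρ : Fin m → ZMod n) (t : ℤ) : Sf b ρ (t - 1) - 1 ≤ Sf b ρ t := by
  unfold Sf
  have h := N_step ρ t
  have : (0:ℤ) ≤ (b : ℤ) * (cnt ρ t : ℤ) := by positivity
  nlinarith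

lemma sum_cnt_window [NeZero n] (ρ : Fin m → ZMod n) (t : ℤ) :
    ∑ j ∈ Finset.Ioc t (t + n), (cnt ρ j : ℤ) = (m : ℤ) := by
  have hcard : ∑ j ∈ Finset.Ioc t (t + n), cnt ρ j
      = ∑ z : ZMod n, (Finset.univ.filter fun k => ρ k = z).card := by
    refine Finset.sum_nbij' (fun j => (j : ZMod n))
      (fun z => t + 1 + ((z - ((t + 1 : ℤ) : ZMod n)).val : ℤ)) ?_ ?_ ?_ ?_ ?_
    · intro a _
      exact Finset.mem_univ _
    · intro z _
      have := ZMod.val_lt (z - ((t + 1 : ℤ) : ZMod n))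
      simp only [Finset.mem_Ioc]
      omega
    · intro j hj
      beta_reduce
      simp only [Finset.mem_Ioc] at hj
      have h1 : ((j : ZMod n) - ((t + 1 : ℤ) : ZMod n)) = ((j - (t + 1) : ℤ) : ZMod n) := by
        push_cast
        ring
      rw [h1]
      have h2 : (((j - (t + 1) : ℤ) : ZMod n).val : ℤ) = (j - (t + 1)) % n :=
        ZMod.val_intCast _
      rw [h2, Int.emod_eq_of_lt (by omega) (by omega)]
      omega
    · intro z _
      beta_reduce
      have hv : (((z - ((t + 1 : ℤ) : ZMod n)).val : ℕ) : ZMod n)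
          = z - ((t + 1 : ℤ) : ZMod n) := ZMod.natCast_rightInverse _
      rw [Int.cast_add, Int.cast_natCast, hv]
      ring
    · intro j _
      rfl
  have hm : ∑ z : ZMod n, (Finset.univ.filter fun k => ρ k = z).card = m := by
    classical
    have := Finset.card_eq_sum_card_fiberwise
      (f := ρ) (s := Finset.univ) (t := Finset.univ) (fun k _ => Finset.mem_univ _)
    simp only [Finset.card_univ, Fintype.card_fin] at this
    exact this.symm
  rw [← Nat.cast_sum, hcard, hm]

lemma Sf_per [NeZero n] (b : ℕ) (ρ : Fin m → ZMod n) (t : ℤ) :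
    Sf b ρ (t + n) = Sf b ρ t + b * m - n := by
  unfold Sf
  have h := N_add ρ (t := t) (t' := t + n) (by omega)
  rw [sum_cnt_window] at h
  rw [h]
  ring

lemma card_rep_le [NeZero n] (sig : Fin m → ZMod n) {x : ℕ} (hx : x ≤ n) :
    (Finset.univ.filter fun k => rep n (sig k) ≤ x).card
      = ∑ j ∈ Finset.Ioc (0 : ℤ) (x : ℤ), cnt sig j := by
  classical
  rw [Finset.card_eq_sum_card_fiberwise
    (f := fun k => ((rep n (sig k) : ℕ) : ℤ)) (t := Finset.Ioc (0 : ℤ) (x : ℤ))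
    (fun k hk => by
      simp only [Finset.mem_coe, Finset.mem_filter] at hk ⊢
      have := one_le_rep (sig k)
      simp only [Finset.mem_Ioc]
      omega)]
  apply Finset.sum_congr rfl
  intro j hj
  simp only [Finset.mem_Ioc] at hj
  unfold cnt
  congr 1
  ext k
  simp only [Finset.mem_filter, Finset.mem_univ, true_and]
  constructor
  · rintro ⟨h1, h2⟩
    have : ((rep n (sig k) : ℕ) : ZMod n) = ((j : ℤ) : ZMod n) := by
      rw [← h2]
      push_cast
      ring
    rw [← this, cast_rep]
  · intro h
    have hj1 : j = ((j.toNat : ℕ) : ℤ) := by omega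
    have hrep : rep n (sig k) = j.toNat := by
      have hcast : ((j.toNat : ℕ) : ZMod n) = ((j : ℤ) : ZMod n) :=
        (Int.cast_natCast _).symm.trans
          (congrArg (fun z : ℤ => (z : ZMod n)) (by omega))
      have hc : sig k = ((j.toNat : ℕ) : ZMod n) := by rw [h, hcast]
      rw [hc, rep_cast (by omega) (by omega)]
    constructor
    · omega
    · omega

lemma card_shift [NeZero n] (ρ : Fin m → ZMod n) (c' : ℤ) {x : ℕ} (hx : x ≤ n) :
    ((Finset.univ.filter fun k => rep n (ρ k + ((c' : ℤ) : ZMod n)) ≤ x).card : ℤ)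
      = N ρ ((x : ℤ) - c') - N ρ (-c') := by
  rw [card_rep_le (fun k => ρ k + ((c' : ℤ) : ZMod n)) hx]
  have h1 : ∀ j : ℤ, cnt (fun k => ρ k + ((c' : ℤ) : ZMod n)) j = cnt ρ (j - c') := by
    intro j
    unfold cnt
    congr 1
    apply Finset.filter_congr
    intro k _
    beta_reduce
    constructor
    · intro h
      have : ρ k = (j : ZMod n) - ((c' : ℤ) : ZMod n) := by
        rw [← h]; ring
      rw [this]
      push_cast
      ring
    · intro h
      rw [h]
      push_cast
      ring
  have h2 : ∑ j ∈ Finset.Ioc (0 : ℤ) (x : ℤ), (cnt (fun k => ρ k + ((c' : ℤ) : ZMod n)) j : ℤ)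
      = ∑ j ∈ Finset.Ioc (-c') ((x : ℤ) - c'), (cnt ρ j : ℤ) := by
    rw [Finset.sum_congr rfl (fun j _ => by rw [h1 j])]
    rw [show Finset.Ioc (-c') ((x : ℤ) - c')
        = (Finset.Ioc (0 : ℤ) (x : ℤ)).map ⟨fun y => y + (-c'), add_left_injective (-c')⟩ by
      ext y
      simp only [Finset.mem_Ioc, Finset.mem_map, Function.Embedding.coeFn_mk]
      constructor
      · intro hy
        exact ⟨y + c', by omega, by ring⟩
      · rintro ⟨u, hu, rfl⟩
        omega]
    rw [Finset.sum_map]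
    apply Finset.sum_congr rfl
    intro j _
    simp only [Function.Embedding.coeFn_mk, sub_eq_add_neg]
  have h3 := N_add ρ (t := -c') (t' := (x : ℤ) - c') (by omega)
  push_cast
  rw [h2]
  omega

end Counting

section PF

/-- the parking condition on `ZMod n`-valued sequences via representatives. -/
def PF' (a b : ℕ) {m n : ℕ} (ρ : Fin m → ZMod n) : Prop :=
  ∀ i : Fin m, (i : ℕ) + 1 ≤ (Finset.univ.filter fun k => rep n (ρ k) ≤ a + (i : ℕ) * b).card

instance {a b m n : ℕ} (ρ : Fin m → ZMod n) : Decidable (PF' a b ρ) :=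
  decidable_of_iff (∀ i : Fin m, (i : ℕ) + 1
    ≤ (Finset.univ.filter fun k => rep n (ρ k) ≤ a + (i : ℕ) * b).card) Iff.rfl

variable {a b m : ℕ}

lemma PF'_iff (ha : 1 ≤ a) (hb : 1 ≤ b) (σ : Fin m → ZMod (a + m * b)) :
    PF' a b σ ↔ ∀ x : ℕ, x < a + m * b →
      (1 : ℤ) ≤ (a : ℤ)
        + (b : ℤ) * ((Finset.univ.filter fun k => rep (a + m * b) (σ k) ≤ x).card : ℤ)
        - (x : ℤ) := by
  constructor
  · intro hσ x hx
    by_cases hxa : x < a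
    · have hc : (0 : ℤ) ≤ (b : ℤ)
          * ((Finset.univ.filter fun k => rep (a + m * b) (σ k) ≤ x).card : ℤ) := by
        positivity
      have hx' : (x : ℤ) ≤ (a : ℤ) - 1 := by exact_mod_cast Nat.le_sub_one_of_lt hxa
      linarith
    · push_neg at hxa
      set i := (x - a) / b with hi
      set r := (x - a) % b with hr
      have him : i < m := by
        rw [hi, Nat.div_lt_iff_lt_mul hb]
        omega
      have hdm : b * i + r = x - a := Nat.div_add_mod (x - a) b
      have hrb : r < b := Nat.mod_lt _ hb
      have hmono : (Finset.univ.filter fun k => rep (a + m * b) (σ k) ≤ a + i * b).card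
          ≤ (Finset.univ.filter fun k => rep (a + m * b) (σ k) ≤ x).card := by
        apply Finset.card_le_card
        intro k hk
        simp only [Finset.mem_filter, Finset.mem_univ, true_and] at hk ⊢
        have hib : i * b = b * i := Nat.mul_comm i b
        omega
      have hσi := hσ ⟨i, him⟩
      simp only at hσi
      have hLn : i + 1 ≤ (Finset.univ.filter fun k => rep (a + m * b) (σ k) ≤ x).card :=
        le_trans hσi hmono
      have hbl : b * (i + 1) ≤ b * (Finset.univ.filter fun k =>
          rep (a + m * b) (σ k) ≤ x).card := Nat.mul_le_mul_left b hLn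
      have hexp : b * (i + 1) = b * i + b := by ring
      have hclaim : x + 1 ≤ a + b * (Finset.univ.filter fun k =>
          rep (a + m * b) (σ k) ≤ x).card := by omega
      have hclaimz : (x : ℤ) + 1 ≤ (a : ℤ) + (b : ℤ) * ((Finset.univ.filter fun k =>
          rep (a + m * b) (σ k) ≤ x).card : ℤ) := by exact_mod_cast hclaim
      linarith
  · intro h i
    have hib : a + (i : ℕ) * b < a + m * b := by
      have h1 : ((i : ℕ) + 1) * b ≤ m * b := Nat.mul_le_mul_right b i.2
      have h2 : ((i : ℕ) + 1) * b = (i : ℕ) * b + b := by ring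
      omega
    have hx := h (a + (i : ℕ) * b) hib
    by_contra hc
    push_neg at hc
    have hLe : (Finset.univ.filter fun k =>
        rep (a + m * b) (σ k) ≤ a + (i : ℕ) * b).card ≤ (i : ℕ) := by omega
    have hmul : b * (Finset.univ.filter fun k =>
        rep (a + m * b) (σ k) ≤ a + (i : ℕ) * b).card ≤ b * (i : ℕ) :=
      Nat.mul_le_mul_left b hLe
    have hmz : (b : ℤ) * ((Finset.univ.filter fun k =>
          rep (a + m * b) (σ k) ≤ a + (i : ℕ) * b).card : ℤ)
        ≤ (b : ℤ) * ((i : ℕ) : ℤ) := by exact_mod_cast hmul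
    have hcast : ((a + (i : ℕ) * b : ℕ) : ℤ) = (a : ℤ) + ((i : ℕ) : ℤ) * (b : ℤ) := by
      push_cast
      ring
    rw [hcast] at hx
    nlinarith

lemma PF'_shift (ha : 1 ≤ a) (hb : 1 ≤ b) (hm : 1 ≤ m)
    (ρ : Fin m → ZMod (a + m * b)) (c' : ℤ) :
    PF' a b (fun k => ρ k + ((c' : ℤ) : ZMod (a + m * b))) ↔
      ∀ y ∈ Finset.Ioo ((((a + m * b : ℕ) : ℤ) - c') - ((a + m * b : ℕ) : ℤ))
          (((a + m * b : ℕ) : ℤ) - c'),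
        Sf b ρ (((a + m * b : ℕ) : ℤ) - c') < Sf b ρ y := by
  haveI : NeZero (a + m * b) := ⟨by omega⟩
  have hSper : ∀ y : ℤ, Sf b ρ (y + ((a + m * b : ℕ) : ℤ)) = Sf b ρ y - (a : ℤ) := by
    intro y
    have h1 := Sf_per b ρ y
    have hc : (b : ℤ) * (m : ℤ) - ((a + m * b : ℕ) : ℤ) = -(a : ℤ) := by
      push_cast
      ring
    omega
  have hF : ∀ x : ℕ, x ≤ a + m * b →
      (a : ℤ) + (b : ℤ) * ((Finset.univ.filter fun k =>
          rep (a + m * b) (ρ k + ((c' : ℤ) : ZMod (a + m * b))) ≤ x).card : ℤ) - (x : ℤ)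
        = (a : ℤ) + Sf b ρ ((x : ℤ) - c') - Sf b ρ (-c') := by
    intro x hx
    rw [card_shift ρ c' hx]
    unfold Sf
    ring
  have hSt : Sf b ρ (((a + m * b : ℕ) : ℤ) - c') = Sf b ρ (-c') - (a : ℤ) := by
    have h1 := hSper (-c')
    have he : -c' + ((a + m * b : ℕ) : ℤ) = ((a + m * b : ℕ) : ℤ) - c' := by ring
    rw [he] at h1
    exact h1
  rw [PF'_iff ha hb]
  constructor
  · intro h y hy
    simp only [Finset.mem_Ioo] at hy
    have hyx : ((y + c').toNat : ℤ) = y + c' := by omega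
    have h1 := h (y + c').toNat (by omega)
    rw [hF _ (by omega)] at h1
    rw [show ((((y + c').toNat : ℕ) : ℤ) - c') = y by omega] at h1
    omega
  · intro h x hx
    rw [hF _ (by omega)]
    rcases Nat.eq_zero_or_pos x with h0 | h0
    · subst h0
      simp only [Nat.cast_zero, zero_sub]
      omega
    · have hy := h ((x : ℤ) - c') (by simp only [Finset.mem_Ioo]; omega)
      omega

lemma orbit_count [NeZero (a + m * b)] (ha : 1 ≤ a) (hb : 1 ≤ b) (hm : 1 ≤ m)
    (ρ : Fin m → ZMod (a + m * b)) :
    (Finset.univ.filter fun c : ZMod (a + m * b) =>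
      PF' a b (fun k => ρ k + c)).card = a := by
  classical
  have hSper : ∀ y : ℤ, Sf b ρ (y + ((a + m * b : ℕ) : ℤ)) = Sf b ρ y - (a : ℤ) := by
    intro y
    have h1 := Sf_per b ρ y
    have hc : (b : ℤ) * (m : ℤ) - ((a + m * b : ℕ) : ℤ) = -(a : ℤ) := by
      push_cast
      ring
    omega
  have hcyc := cycle_count (S := Sf b ρ) (n := a + m * b) (A := a)
    (by omega) (Sf_step b ρ) hSper (by omega)
  refine Eq.trans ?_ hcyc
  apply Finset.card_nbij' (j := fun t => (((((a + m * b : ℕ) : ℤ) - t) : ℤ) : ZMod (a + m * b)))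
    (i := fun c => ((a + m * b : ℕ) : ℤ) - (c.val : ℤ))
  · intro c hc
    simp only [Finset.mem_coe, Finset.mem_filter, Finset.mem_univ, true_and] at hc
    simp only [Finset.mem_coe, Finset.mem_filter, Finset.mem_Ioc]
    have hvlt := ZMod.val_lt c
    refine ⟨⟨by omega, by omega⟩, ?_⟩
    have hcv : (((c.val : ℕ) : ℤ) : ZMod (a + m * b)) = c := by
      rw [Int.cast_natCast]
      exact ZMod.natCast_rightInverse c
    rw [← hcv] at hc
    have h1 := (PF'_shift ha hb hm ρ ((c.val : ℕ) : ℤ)).1 hc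
    intro y hy
    have h2 := h1 y
    rw [show ((a + m * b : ℕ) : ℤ) - ((c.val : ℕ) : ℤ) - ((a + m * b : ℕ) : ℤ)
        = ((a + m * b : ℕ) : ℤ) - ((c.val : ℕ) : ℤ) - ((a + m * b : ℕ) : ℤ) from rfl] at h2
    exact h2 hy
  · intro t ht
    simp only [Finset.mem_coe, Finset.mem_filter, Finset.mem_Ioc] at ht
    simp only [Finset.mem_coe, Finset.mem_filter, Finset.mem_univ, true_and]
    apply (PF'_shift ha hb hm ρ (((a + m * b : ℕ) : ℤ) - t)).2
    intro y hy
    rw [show ((a + m * b : ℕ) : ℤ) - (((a + m * b : ℕ) : ℤ) - t) = t from by ring] at hy ⊢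
    exact ht.2 y hy
  · intro c hc
    have : ((a + m * b : ℕ) : ℤ) - (((a + m * b : ℕ) : ℤ) - ((c.val : ℕ) : ℤ))
        = ((c.val : ℕ) : ℤ) := by ring
    beta_reduce
    rw [this, Int.cast_natCast]
    exact ZMod.natCast_rightInverse c

  · intro t ht
    simp only [Finset.mem_coe, Finset.mem_filter, Finset.mem_Ioc] at ht
    beta_reduce
    have hv := ZMod.val_intCast (n := a + m * b) (((a + m * b : ℕ) : ℤ) - t)
    rw [Int.emod_eq_of_lt (by omega) (by omega)] at hv
    omega
lemma global_count [NeZero (a + m * b)] (ha : 1 ≤ a) (hb : 1 ≤ b) (hm : 1 ≤ m) :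
    (Finset.univ.filter fun ρ : Fin m → ZMod (a + m * b) => PF' a b ρ).card * (a + m * b)
      = a * (a + m * b) ^ m := by
  classical
  have key : ∀ c : ZMod (a + m * b),
      (Finset.univ.filter fun ρ : Fin m → ZMod (a + m * b) =>
        PF' a b (fun k => ρ k + c)).card
      = (Finset.univ.filter fun ρ : Fin m → ZMod (a + m * b) => PF' a b ρ).card := by
    intro c
    apply Finset.card_nbij' (i := fun ρ => fun k => ρ k + c) (j := fun σ => fun k => σ k - c)
    · intro ρ hρ
      simp only [Finset.mem_coe, Finset.mem_filter, Finset.mem_univ, true_and] at hρ ⊢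
      exact hρ
    · intro σ hσ
      simp only [Finset.mem_coe, Finset.mem_filter, Finset.mem_univ, true_and] at hσ ⊢
      have : (fun k => (σ k - c) + c) = σ := by
        funext k
        ring
      rw [this]
      exact hσ
    · intro ρ _
      funext k
      ring
    · intro σ _
      funext k
      ring
  have hL : ∑ ρ : Fin m → ZMod (a + m * b),
      (Finset.univ.filter fun c : ZMod (a + m * b) => PF' a b (fun k => ρ k + c)).card
      = a * (a + m * b) ^ m := by
    rw [Finset.sum_congr rfl (fun ρ _ => orbit_count ha hb hm ρ)]
    rw [Finset.sum_const, Finset.card_univ, smul_eq_mul]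
    rw [Fintype.card_fun, ZMod.card, Fintype.card_fin]
    ring
  have hR : ∑ ρ : Fin m → ZMod (a + m * b),
      (Finset.univ.filter fun c : ZMod (a + m * b) => PF' a b (fun k => ρ k + c)).card
      = (Finset.univ.filter fun ρ : Fin m → ZMod (a + m * b) => PF' a b ρ).card
        * (a + m * b) := by
    calc ∑ ρ : Fin m → ZMod (a + m * b),
        (Finset.univ.filter fun c : ZMod (a + m * b) => PF' a b (fun k => ρ k + c)).card
        = ∑ ρ : Fin m → ZMod (a + m * b), ∑ c : ZMod (a + m * b),
            if PF' a b (fun k => ρ k + c) then 1 else 0 := by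
          apply Finset.sum_congr rfl
          intro ρ _
          rw [Finset.card_filter]
      _ = ∑ c : ZMod (a + m * b), ∑ ρ : Fin m → ZMod (a + m * b),
            if PF' a b (fun k => ρ k + c) then 1 else 0 := Finset.sum_comm
      _ = ∑ c : ZMod (a + m * b),
            (Finset.univ.filter fun ρ : Fin m → ZMod (a + m * b) =>
              PF' a b (fun k => ρ k + c)).card := by
          apply Finset.sum_congr rfl
          intro c _
          rw [Finset.card_filter]
      _ = ∑ c : ZMod (a + m * b),
            (Finset.univ.filter fun ρ : Fin m → ZMod (a + m * b) => PF' a b ρ).card := by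
          exact Finset.sum_congr rfl (fun c _ => key c)
      _ = (Finset.univ.filter fun ρ : Fin m → ZMod (a + m * b) => PF' a b ρ).card
            * (a + m * b) := by
          rw [Finset.sum_const, Finset.card_univ, ZMod.card, smul_eq_mul]
          ring
  rw [← hL]
  exact hR.symm

end PF

end ABPFAux

/-- `π` is an `(a,b)`-parking function of length `m`: a sequence of positive
integers whose weakly increasing rearrangement `λ₁ ≤ … ≤ λ_m` satisfies
`λ_i ≤ a + (i-1)b`; equivalently, for every `i ∈ [m]`,
`#{k : π k ≤ a + (i-1)b} ≥ i`. -/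
def IsABPF (a b m : ℕ) (π : Fin m → ℕ) : Prop :=
  (∀ k, 1 ≤ π k) ∧
  ∀ i : Fin m, (i : ℕ) + 1 ≤ (Finset.univ.filter (fun k => π k ≤ a + (i : ℕ) * b)).card

theorem card_ABPF (a b m : ℕ) (ha : 1 ≤ a) (hb : 1 ≤ b) (hm : 1 ≤ m) :
    {π : Fin m → ℕ | IsABPF a b m π}.ncard = a * (a + m * b) ^ (m - 1) := by
  classical
  haveI : NeZero (a + m * b) := ⟨by omega⟩
  have hinj : Function.Injective
      (fun (ρ : Fin m → ZMod (a + m * b)) => (fun k => ABPFAux.rep (a + m * b) (ρ k))) := by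
    intro ρ σ h
    funext k
    have hk := congrFun h k
    simp only at hk
    rw [← ABPFAux.cast_rep (ρ k), ← ABPFAux.cast_rep (σ k), hk]
  have hset : {π : Fin m → ℕ | IsABPF a b m π}
      = (fun (ρ : Fin m → ZMod (a + m * b)) => (fun k => ABPFAux.rep (a + m * b) (ρ k))) ''
        ↑(Finset.univ.filter fun ρ : Fin m → ZMod (a + m * b) => ABPFAux.PF' a b ρ) := by
    ext π
    simp only [Set.mem_setOf_eq, Set.mem_image, Finset.mem_coe, Finset.mem_filter,
      Finset.mem_univ, true_and]
    constructor
    · rintro ⟨hpos, hcond⟩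
      have hub : ∀ k, π k ≤ a + (m - 1) * b := by
        intro k
        have h1 := hcond ⟨m - 1, by omega⟩
        have h1' : m ≤ (Finset.univ.filter fun k => π k ≤ a + (m - 1) * b).card := by
          have hmm : ((⟨m - 1, by omega⟩ : Fin m) : ℕ) = m - 1 := rfl
          rw [hmm] at h1
          omega
        have h3 : (Finset.univ.filter fun k => π k ≤ a + (m - 1) * b).card ≤ m := by
          have := Finset.card_filter_le (Finset.univ : Finset (Fin m))
            (fun k => π k ≤ a + (m - 1) * b)
          simpa using this
        have h4 : (Finset.univ.filter fun k => π k ≤ a + (m - 1) * b) = Finset.univ := by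
          apply Finset.eq_univ_of_card
          simp only [Fintype.card_fin]
          omega
        have h5 : k ∈ Finset.univ.filter fun k => π k ≤ a + (m - 1) * b := by
          rw [h4]; exact Finset.mem_univ k
        simp only [Finset.mem_filter] at h5
        exact h5.2
      have hlen : ∀ k, π k ≤ a + m * b := by
        intro k
        have hmb : (m - 1) * b ≤ m * b := Nat.mul_le_mul_right b (by omega)
        have := hub k
        omega
      have hrepeq : ∀ k, ABPFAux.rep (a + m * b) (((π k : ℕ) : ZMod (a + m * b))) = π k :=
        fun k => ABPFAux.rep_cast (hpos k) (hlen k)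
      refine ⟨fun k => ((π k : ℕ) : ZMod (a + m * b)), ?_, ?_⟩
      · intro i
        simp only [hrepeq]
        exact hcond i
      · funext k
        exact hrepeq k
    · rintro ⟨ρ, hρ, rfl⟩
      constructor
      · intro k
        exact ABPFAux.one_le_rep (ρ k)
      · intro i
        exact hρ i
  rw [hset, Set.ncard_image_of_injective _ hinj, Set.ncard_coe_finset]
  have hglob := ABPFAux.global_count (a := a) (b := b) (m := m) ha hb hm
  have hpow : a * (a + m * b) ^ m = (a * (a + m * b) ^ (m - 1)) * (a + m * b) := by
    have h : (a + m * b) ^ m = (a + m * b) ^ (m - 1) * (a + m * b) := by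
      rw [← pow_succ, Nat.sub_add_cancel hm]
    rw [h]
    ring
  rw [hpow] at hglob
  exact Nat.eq_of_mul_eq_mul_right (by omega) hglob
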